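/- Let Γ be a finite group and k a natural number coprime to |Γ|. If χ is the character of an irreducible finite-dimensional complex representation of Γ, then the class function g ↦ χ(g^k) is again the character of an irreducible finite-dimensional complex representation of Γ. -/

import Mathlib

open CategoryTheory Polynomial Module



-- EXT lemma
lemma ext_embedding {K L K₀ : Type} [Field K] [Field L] [Field K₀]
    [IsAlgClosed K] [IsAlgClosed L] [Countable K₀]
    (hK : Cardinal.aleph0 < Cardinal.mk K) (hKL : Cardinal.mk K = Cardinal.mk L)
    (f₁ : K₀ →+* K) (f₂ : K₀ →+* L) :
    ∃ φ : K ≃+* L, ∀ x, φ (f₁ x) = f₂ x := by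
  letI : Algebra K₀ K := f₁.toAlgebra
  letI : Algebra K₀ L := f₂.toAlgebra
  haveI := (faithfulSMul_iff_algebraMap_injective K₀ K).2
    (show Function.Injective (algebraMap K₀ K) from f₁.injective)
  haveI := (faithfulSMul_iff_algebraMap_injective K₀ L).2
    (show Function.Injective (algebraMap K₀ L) from f₂.injective)
  obtain ⟨s, hs⟩ := exists_isTranscendenceBasis K₀ K
  obtain ⟨t, ht⟩ := exists_isTranscendenceBasis K₀ L
  have hcard : Cardinal.mk s = Cardinal.mk t := by
    rw [← IsAlgClosed.cardinal_eq_cardinal_transcendence_basis_of_aleph0_lt' _ hs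
        Cardinal.mk_le_aleph0 hK,
      ← IsAlgClosed.cardinal_eq_cardinal_transcendence_basis_of_aleph0_lt' _ ht
        Cardinal.mk_le_aleph0 (hKL ▸ hK), hKL]
  obtain ⟨e⟩ := Cardinal.eq.1 hcard
  letI := IsAlgClosed.isAlgClosure_of_transcendence_basis _ hs
  letI := IsAlgClosed.isAlgClosure_of_transcendence_basis _ ht
  let e₁ := hs.1.aevalEquiv
  let e₂ := MvPolynomial.renameEquiv K₀ e
  let e₃ := ht.1.aevalEquiv
  let e' : Algebra.adjoin K₀ (Set.range ((↑) : s → K)) ≃+*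
      Algebra.adjoin K₀ (Set.range ((↑) : t → L)) :=
    (e₁.symm.toRingEquiv.trans e₂.toRingEquiv).trans e₃.toRingEquiv
  refine ⟨IsAlgClosure.equivOfEquiv K L e', fun x => ?_⟩
  have h1 : f₁ x = algebraMap _ K (algebraMap K₀ (Algebra.adjoin K₀ (Set.range ((↑) : s → K))) x) := by
    rw [← IsScalarTower.algebraMap_apply]; rfl
  have h2 : e' (algebraMap K₀ _ x) = algebraMap K₀ _ x := by
    show e₃.toRingEquiv (e₂.toRingEquiv (e₁.symm.toRingEquiv (algebraMap K₀ _ x))) = _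
    have : e₁.symm.toRingEquiv (algebraMap K₀ _ x) = algebraMap K₀ _ x := e₁.symm.commutes x
    rw [this]
    have : e₂.toRingEquiv (algebraMap K₀ _ x) = algebraMap K₀ _ x := e₂.commutes x
    rw [this]
    exact e₃.commutes x
  rw [h1, IsAlgClosure.equivOfEquiv_algebraMap, h2, ← IsScalarTower.algebraMap_apply]
  rfl
lemma exists_aut (n k : ℕ) (hn : 0 < n) (hk : Nat.Coprime k n) :
    ∃ φ : ℂ ≃+* ℂ, ∀ z : ℂ, z ^ n = 1 → φ z = z ^ k := by
  haveI : NeZero n := ⟨hn.ne'⟩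
  set ν : ℕ+ := ⟨n, hn⟩ with hν
  set K₀ := CyclotomicField ν ℚ with hK₀
  haveI : IsCyclotomicExtension {(ν : ℕ)} ℚ K₀ :=
    CyclotomicField.isCyclotomicExtension (ν : ℕ) ℚ
  haveI : FiniteDimensional ℚ K₀ := IsCyclotomicExtension.finiteDimensional {(ν : ℕ)} ℚ K₀
  haveI : Countable K₀ :=
    (Module.Free.chooseBasis ℚ K₀).repr.toEquiv.injective.countable
  set ζ : ℂ := Complex.exp (2 * Real.pi * Complex.I / n) with hζdef
  have hζ : IsPrimitiveRoot ζ n := Complex.isPrimitiveRoot_exp n hn.ne'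
  have hζk : IsPrimitiveRoot (ζ ^ k) n := hζ.pow_of_coprime k hk
  have hζ₀ : IsPrimitiveRoot (IsCyclotomicExtension.zeta ν ℚ K₀) ν :=
    IsCyclotomicExtension.zeta_spec ν ℚ K₀
  have hirr : Irreducible (cyclotomic ν ℚ) := cyclotomic.irreducible_rat ν.pos
  have hmem : ζ ∈ primitiveRoots (ν : ℕ) ℂ := (mem_primitiveRoots ν.pos).2 hζ
  have hmemk : ζ ^ k ∈ primitiveRoots (ν : ℕ) ℂ := (mem_primitiveRoots ν.pos).2 hζk
  set f₁ : K₀ →ₐ[ℚ] ℂ := (hζ₀.embeddingsEquivPrimitiveRoots ℂ hirr).symm ⟨ζ, hmem⟩ with hf₁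
  set f₂ : K₀ →ₐ[ℚ] ℂ := (hζ₀.embeddingsEquivPrimitiveRoots ℂ hirr).symm ⟨ζ ^ k, hmemk⟩ with hf₂
  have hf₁ζ : f₁ (IsCyclotomicExtension.zeta ν ℚ K₀) = ζ := by
    have := hζ₀.embeddingsEquivPrimitiveRoots_apply_coe ℂ hirr f₁
    rw [hf₁, Equiv.apply_symm_apply] at this
    exact this.symm
  have hf₂ζ : f₂ (IsCyclotomicExtension.zeta ν ℚ K₀) = ζ ^ k := by
    have := hζ₀.embeddingsEquivPrimitiveRoots_apply_coe ℂ hirr f₂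
    rw [hf₂, Equiv.apply_symm_apply] at this
    exact this.symm
  obtain ⟨φ, hφ⟩ := ext_embedding (K := ℂ) (L := ℂ)
    (Cardinal.mk_complex ▸ Cardinal.aleph0_lt_continuum) rfl
    f₁.toRingHom f₂.toRingHom
  refine ⟨φ, fun z hz => ?_⟩
  obtain ⟨a, _, rfl⟩ := hζ.eq_pow_of_pow_eq_one hz
  have hφζ : φ ζ = ζ ^ k := by
    have := hφ (IsCyclotomicExtension.zeta ν ℚ K₀)
    simpa [hf₁ζ, hf₂ζ] using this
  rw [map_pow, hφζ, ← pow_mul, mul_comm k a, pow_mul]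


lemma trace_pow_twist {M : Type} [AddCommGroup M] [Module ℂ M] [FiniteDimensional ℂ M]
    (A : Module.End ℂ M) (n k : ℕ) (hn : 0 < n) (hA : A ^ n = 1)
    (φ : ℂ →+* ℂ) (hφ : ∀ z : ℂ, z ^ n = 1 → φ z = z ^ k) :
    φ (LinearMap.trace ℂ M A) = LinearMap.trace ℂ M (A ^ k) := by
  have hsq : Squarefree ((X : ℂ[X]) ^ n - C 1) := by
    have := Polynomial.separable_X_pow_sub_C (1 : ℂ) (n := n)
      (by exact_mod_cast Nat.cast_ne_zero.2 hn.ne') one_ne_zero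
    exact this.squarefree
  have hss : A.IsSemisimple := by
    apply Module.End.isSemisimple_of_squarefree_aeval_eq_zero hsq
    simp [map_pow, hA]
  have hfss : A.IsFinitelySemisimple := hss.isFinitelySemisimple
  set N := A.maxGenEigenspace with hN
  have key : ∀ μ : ℂ, ∀ x ∈ N μ, A x = μ • x := by
    intro μ x hx
    rw [hN, hfss.maxGenEigenspace_eq_eigenspace] at hx
    exact Module.End.mem_eigenspace_iff.1 hx
  have keypow : ∀ (j : ℕ) (μ : ℂ), ∀ x ∈ N μ, (A ^ j) x = μ ^ j • x := by
    intro j μ x hx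
    induction j with
    | zero => simp
    | succ j ih =>
      rw [pow_succ', pow_succ']
      calc (A * A ^ j) x = A ((A ^ j) x) := rfl
        _ = A (μ ^ j • x) := by rw [ih]
        _ = μ ^ j • (A x) := by rw [map_smul]
        _ = μ ^ j • (μ • x) := by rw [key μ x hx]
        _ = (μ * μ ^ j) • x := by rw [smul_smul, mul_comm]
  have hroot : ∀ μ : ℂ, N μ ≠ ⊥ → μ ^ n = 1 := by
    intro μ hbot
    obtain ⟨x, hx, hx0⟩ := Submodule.exists_mem_ne_zero_of_ne_bot hbot
    have h1 : (A ^ n) x = μ ^ n • x := keypow n μ x hx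
    rw [hA] at h1
    have : (μ ^ n - 1) • x = 0 := by
      rw [sub_smul, one_smul, ← h1]; simp
    rcases smul_eq_zero.1 this with h | h
    · linear_combination h
    · exact absurd h hx0
  have htop : ⨆ μ, N μ = ⊤ := Module.End.iSup_maxGenEigenspace_eq_top A
  have hind := A.independent_maxGenEigenspace
  have hint := DirectSum.isInternal_submodule_of_iSupIndep_of_iSup_eq_top hind htop
  have hfin : {μ : ℂ | N μ ≠ ⊥}.Finite := WellFoundedGT.finite_ne_bot_of_iSupIndep hind
  have hmapsA : ∀ μ : ℂ, Set.MapsTo A (N μ) (N μ) :=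
    fun μ => A.mapsTo_maxGenEigenspace_of_comm rfl μ
  have hmapsAk : ∀ μ : ℂ, Set.MapsTo (A ^ k) (N μ) (N μ) :=
    fun μ => A.mapsTo_maxGenEigenspace_of_comm ((Commute.refl A).pow_right k) μ
  have trA := LinearMap.trace_eq_sum_trace_restrict' hint hfin hmapsA
  have trAk := LinearMap.trace_eq_sum_trace_restrict' hint hfin hmapsAk
  have hres : ∀ μ : ℂ, LinearMap.trace ℂ (N μ) (A.restrict (hmapsA μ)) =
      μ * (finrank ℂ (N μ) : ℂ) := by
    intro μ
    have : A.restrict (hmapsA μ) = μ • (1 : Module.End ℂ (N μ)) := by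
      ext x
      simp only [LinearMap.restrict_coe_apply, LinearMap.smul_apply, Module.End.one_apply,
        SetLike.val_smul]
      exact key μ x.1 x.2
    rw [this, map_smul, LinearMap.trace_one, smul_eq_mul]
  have hresk : ∀ μ : ℂ, LinearMap.trace ℂ (N μ) ((A ^ k).restrict (hmapsAk μ)) =
      μ ^ k * (finrank ℂ (N μ) : ℂ) := by
    intro μ
    have : (A ^ k).restrict (hmapsAk μ) = μ ^ k • (1 : Module.End ℂ (N μ)) := by
      ext x
      simp only [LinearMap.restrict_coe_apply, LinearMap.smul_apply, Module.End.one_apply,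
        SetLike.val_smul]
      exact keypow k μ x.1 x.2
    rw [this, map_smul, LinearMap.trace_one, smul_eq_mul]
  rw [trA, trAk, map_sum]
  refine Finset.sum_congr rfl fun μ hμ => ?_
  have hμ' : N μ ≠ ⊥ := by simpa using (Set.Finite.mem_toFinset hfin).1 hμ
  rw [hres, hresk, map_mul, map_natCast, hφ μ (hroot μ hμ')]


variable {Γ : Type} [Group Γ]

def InvtSub (X : FDRep ℂ Γ) (p : Submodule ℂ X) : Prop :=
  ∀ (g : Γ), ∀ x ∈ p, X.ρ g x ∈ p

lemma hom_eq_zero_iff {X Y : FDRep ℂ Γ} (f : X ⟶ Y) : f = 0 ↔ f.hom = 0 := by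
  constructor
  · rintro rfl; rfl
  · intro h; apply Action.Hom.ext; exact h

lemma comm_apply {X Y : FDRep ℂ Γ} (f : X ⟶ Y) (g : Γ) (x : X) :
    f.hom (X.ρ g x) = Y.ρ g (f.hom x) := by
  have := f.comm g
  have := congrArg (fun (u : X.V ⟶ Y.V) => u x) this
  exact this

/-- The subrepresentation attached to an invariant submodule. -/
noncomputable def subrep (X : FDRep ℂ Γ) (p : Submodule ℂ X) (hp : InvtSub X p) : FDRep ℂ Γ :=
  FDRep.of (V := p)
    { toFun := fun g => (X.ρ g).restrict (fun x hx => hp g x hx)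
      map_one' := by ext x; simp [LinearMap.restrict_apply]
      map_mul' := fun g h => by ext x; simp [LinearMap.restrict_apply] }

noncomputable def subrepIncl (X : FDRep ℂ Γ) (p : Submodule ℂ X) (hp : InvtSub X p) :
    subrep X p hp ⟶ X where
  hom := FGModuleCat.ofHom p.subtype
  comm := fun g => by
    ext x
    rfl

lemma subrepIncl_hom_apply (X : FDRep ℂ Γ) (p : Submodule ℂ X) (hp : InvtSub X p) (x : p) :
    (subrepIncl X p hp).hom x = (x : X) := rfl

instance subrepIncl_mono (X : FDRep ℂ Γ) (p : Submodule ℂ X) (hp : InvtSub X p) :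
    Mono (subrepIncl X p hp) := by
  constructor
  intro Z u v huv
  apply Action.Hom.ext
  ext z
  have := congrArg (fun (w : Z ⟶ X) => w.hom z) huv
  simp only [Action.comp_hom] at this
  exact Subtype.ext this

lemma simple_of_invtSub (X : FDRep ℂ Γ) (hnt : Nontrivial X)
    (h : ∀ p : Submodule ℂ X, InvtSub X p → p = ⊥ ∨ p = ⊤) : Simple X := by
  constructor
  intro Y f hm
  constructor
  · intro hiso h0
    have h1 : inv f ≫ f = 𝟙 X := IsIso.inv_hom_id f
    have hf : f.hom = 0 := (hom_eq_zero_iff f).1 h0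
    have key : ∀ z : X, z = (0 : X) := by
      intro z
      have h3 := congrArg (fun (u : X ⟶ X) => u.hom z) h1
      simp only [Action.comp_hom] at h3
      rw [hf] at h3
      exact h3.symm
    obtain ⟨x, y, hxy⟩ := hnt
    exact hxy ((key x).trans (key y).symm)
  · intro hf0
    -- kernel is an invariant submodule of Y; use mono to show it is ⊥
    have hkerinvt : InvtSub Y (LinearMap.ker f.hom.hom.hom) := by
      intro g x hx
      have hx0 : f.hom x = 0 := hx
      have hc := comm_apply f g x
      have : f.hom (Y.ρ g x) = 0 := by rw [hc, hx0, map_zero]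
      exact this
    have hzero : subrepIncl Y _ hkerinvt ≫ f = 0 := by
      apply Action.Hom.ext
      ext z
      obtain ⟨z, hz⟩ := z
      exact hz
    have hincl0 : subrepIncl Y _ hkerinvt = 0 := by
      have := hm.right_cancellation (subrepIncl Y _ hkerinvt) 0 (by simpa using hzero)
      exact this
    have hinj : Function.Injective f.hom := by
      rw [← LinearMap.ker_eq_bot]
      ext x
      simp only [Submodule.mem_bot]
      constructor
      · intro hx
        have := congrArg (fun (w : subrep Y _ hkerinvt ⟶ Y) => w.hom ⟨x, hx⟩) hincl0
        exact this
      · rintro rfl; simp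
    have hrinvt : InvtSub X (LinearMap.range f.hom.hom.hom) := by
      rintro g x ⟨y, rfl⟩
      exact ⟨Y.ρ g y, (comm_apply f g y)⟩
    have hsurj : Function.Surjective f.hom := by
      rcases h _ hrinvt with hbot | htop
      · exfalso
        apply hf0
        rw [hom_eq_zero_iff]
        apply FGModuleCat.hom_ext
        apply LinearMap.ext
        intro y
        have : f.hom y ∈ (⊥ : Submodule ℂ X) := hbot ▸ LinearMap.mem_range_self f.hom.hom.hom y
        exact (Submodule.mem_bot ℂ).1 this
      · rw [← LinearMap.range_eq_top]; exact htop
    let e : Y ≃ₗ[ℂ] X := LinearEquiv.ofBijective f.hom.hom.hom ⟨hinj, hsurj⟩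
    have he : ∀ y : Y, e y = f.hom y := fun y => rfl
    let ginv : X ⟶ Y :=
      { hom := FGModuleCat.ofHom (e.symm : X →ₗ[ℂ] Y)
        comm := fun g => by
          ext x
          apply hinj
          show f.hom (e.symm ((X.ρ g) x)) = f.hom ((Y.ρ g) (e.symm x))
          rw [comm_apply f g (e.symm x)]
          rw [show f.hom (e.symm ((X.ρ g) x)) = e (e.symm (X.ρ g x)) from rfl,
            e.apply_symm_apply]
          rw [show f.hom (e.symm x) = e (e.symm x) from rfl, e.apply_symm_apply] }
    refine ⟨⟨ginv, ?_, ?_⟩⟩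
    · apply Action.Hom.ext
      ext y
      show e.symm (f.hom y) = y
      rw [← he, e.symm_apply_apply]
    · apply Action.Hom.ext
      ext x
      show f.hom (e.symm x) = x
      rw [show f.hom (e.symm x) = e (e.symm x) from rfl, e.apply_symm_apply]

lemma invtSub_of_simple (X : FDRep ℂ Γ) (hX : Simple X) :
    Nontrivial X ∧ ∀ p : Submodule ℂ X, InvtSub X p → p = ⊥ ∨ p = ⊤ := by
  constructor
  · by_contra hnt
    rw [not_nontrivial_iff_subsingleton] at hnt
    apply CategoryTheory.id_nonzero X
    rw [hom_eq_zero_iff]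
    apply FGModuleCat.hom_ext
    apply LinearMap.ext
    intro z
    exact (@Subsingleton.elim _ hnt _ _ :)
  · intro p hp
    by_contra hcon
    push_neg at hcon
    obtain ⟨hpbot, hptop⟩ := hcon
    have hne : (subrepIncl X p hp) ≠ 0 := by
      obtain ⟨x, hx, hx0⟩ := Submodule.exists_mem_ne_zero_of_ne_bot hpbot
      intro h0
      have := congrArg (fun (w : subrep X p hp ⟶ X) => w.hom ⟨x, hx⟩) h0
      simp only [Action.zero_hom] at this
      exact hx0 this
    have hiso : IsIso (subrepIncl X p hp) := (Simple.mono_isIso_iff_nonzero _).2 hne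
    apply hptop
    rw [Submodule.eq_top_iff']
    intro x
    have h1 : (subrepIncl X p hp) ≫ inv (subrepIncl X p hp) = 𝟙 _ := IsIso.hom_inv_id _
    have h2 : inv (subrepIncl X p hp) ≫ (subrepIncl X p hp) = 𝟙 X := IsIso.inv_hom_id _
    have h3 := congrArg (fun (w : X ⟶ X) => w.hom x) h2
    simp only [Action.comp_hom] at h3
    have : (subrepIncl X p hp).hom ((inv (subrepIncl X p hp)).hom x) = x := h3
    rw [← this]
    exact ((inv (subrepIncl X p hp)).hom x).2


lemma char_twist {M : Type} [AddCommGroup M] [Module ℂ M] [FiniteDimensional ℂ M] {d : ℕ}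
    (b : Basis (Fin d) ℂ M) (φ : ℂ ≃+* ℂ) (f : Module.End ℂ M) :
    LinearMap.trace ℂ (Fin d → ℂ)
        (Matrix.toLinAlgEquiv' ((LinearMap.toMatrix b b f).map φ)) =
      φ (LinearMap.trace ℂ M f) := by
  rw [LinearMap.trace_eq_matrix_trace ℂ (Pi.basisFun ℂ (Fin d)),
    LinearMap.toMatrix_eq_toMatrix']
  have h1 : LinearMap.toMatrix' (Matrix.toLinAlgEquiv'
      ((LinearMap.toMatrix b b f).map φ)) = (LinearMap.toMatrix b b f).map φ :=
    LinearMap.toMatrixAlgEquiv'_toLinAlgEquiv' _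
  rw [h1, LinearMap.trace_eq_matrix_trace ℂ b]
  simp [Matrix.trace, Matrix.diag, Matrix.map_apply, map_sum]

lemma invt_transfer {Γ : Type} [Group Γ] (X W : FDRep ℂ Γ) (τ : X ≃ W) (φ : ℂ ≃+* ℂ)
    (hadd : ∀ x y : X, τ (x + y) = τ x + τ y)
    (hsmul : ∀ (c : ℂ) (x : X), τ (c • x) = φ c • τ x)
    (hcomm : ∀ (g : Γ) (x : X), τ (X.ρ g x) = W.ρ g (τ x))
    (hlat : ∀ p : Submodule ℂ X, InvtSub X p → p = ⊥ ∨ p = ⊤) :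
    ∀ q : Submodule ℂ W, InvtSub W q → q = ⊥ ∨ q = ⊤ := by
  intro q hq
  have hτ0 : τ 0 = 0 := by
    have := hadd 0 0
    rw [add_zero] at this
    exact left_eq_add.mp this
  let p : Submodule ℂ X :=
    { carrier := τ ⁻¹' q
      add_mem' := fun {x y} hx hy => by
        simp only [Set.mem_preimage] at *
        rw [hadd]; exact q.add_mem hx hy
      zero_mem' := by
        simp only [Set.mem_preimage, hτ0]; exact q.zero_mem
      smul_mem' := fun c x hx => by
        simp only [Set.mem_preimage] at *
        rw [hsmul]; exact q.smul_mem _ hx }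
  have hpinv : InvtSub X p := by
    intro g x hx
    have hx' : τ x ∈ q := hx
    show τ (X.ρ g x) ∈ q
    rw [hcomm]
    exact hq g _ hx'
  rcases hlat p hpinv with hbot | htop
  · left
    ext y
    simp only [Submodule.mem_bot]
    constructor
    · intro hy
      have h1 : τ.symm y ∈ p := by
        show τ (τ.symm y) ∈ q
        rw [Equiv.apply_symm_apply]; exact hy
      rw [hbot] at h1
      have h0 : τ.symm y = 0 := h1
      have := congrArg τ h0
      rwa [Equiv.apply_symm_apply, hτ0] at this
    · rintro rfl; exact q.zero_mem
  · right
    ext y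
    simp only [Submodule.mem_top, iff_true]
    have h1 : τ.symm y ∈ p := htop ▸ Submodule.mem_top
    have h2 : τ (τ.symm y) ∈ q := h1
    rwa [Equiv.apply_symm_apply] at h2

/-- **Adams operations coprime to the group order preserve irreducible characters.**
Let `Γ` be a finite group and `k` a natural number coprime to `|Γ|`.  If `χ` is the character
of an irreducible finite-dimensional complex representation of `Γ`, then the class function
`g ↦ χ(gᵏ)` is again the character of an irreducible finite-dimensional complex
representation of `Γ`. -/
theorem stmt7 (Γ : Type) [Group Γ] [Fintype Γ] (k : ℕ)
    (hk : Nat.Coprime k (Fintype.card Γ))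
    (U : FDRep ℂ Γ) (hU : CategoryTheory.Simple U) :
    ∃ V : FDRep ℂ Γ, CategoryTheory.Simple V ∧
      ∀ g : Γ, U.character (g ^ k) = V.character g := by
  classical
  set n := Fintype.card Γ with hndef
  have hn : 0 < n := Fintype.card_pos
  obtain ⟨φ, hφ⟩ := exists_aut n k hn hk
  obtain ⟨hnt, hlat⟩ := invtSub_of_simple U hU
  haveI : Nontrivial U := hnt
  set d := finrank ℂ U with hddef
  have hd : 0 < d := finrank_pos
  haveI : Nonempty (Fin d) := Fin.pos_iff_nonempty.mp hd
  let b : Basis (Fin d) ℂ U := Module.finBasis ℂ U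
  let ρ' : Representation ℂ Γ (Fin d → ℂ) :=
    ((Matrix.toLinAlgEquiv' (R := ℂ) (n := Fin d)).toRingEquiv.toMonoidHom.comp
      ((RingEquiv.mapMatrix φ : Matrix (Fin d) (Fin d) ℂ ≃+* Matrix (Fin d) (Fin d) ℂ).toMonoidHom.comp
        ((LinearMap.toMatrixAlgEquiv b).toRingEquiv.toMonoidHom.comp U.ρ)))
  let W : FDRep ℂ Γ := FDRep.of ρ'
  have hchar : ∀ g : Γ, W.character g = φ (U.character g) := by
    intro g
    show LinearMap.trace ℂ (Fin d → ℂ)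
        (Matrix.toLinAlgEquiv' ((LinearMap.toMatrix b b (U.ρ g)).map φ)) =
      φ (LinearMap.trace ℂ _ (U.ρ g))
    exact char_twist b φ (U.ρ g)
  have hAn : ∀ g : Γ, (U.ρ g) ^ n = 1 := by
    intro g
    rw [← map_pow, hndef, pow_card_eq_one, map_one]
  have hfinal : ∀ g : Γ, U.character (g ^ k) = W.character g := by
    intro g
    rw [hchar g]
    calc U.character (g ^ k) = LinearMap.trace ℂ U (U.ρ (g ^ k)) := rfl
      _ = LinearMap.trace ℂ U ((U.ρ g) ^ k) := by rw [map_pow]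
      _ = φ (LinearMap.trace ℂ U (U.ρ g)) :=
          (trace_pow_twist (U.ρ g) n k hn (hAn g) (φ : ℂ →+* ℂ) hφ).symm
      _ = φ (U.character g) := rfl
  -- simplicity
  let τe : U ≃ (Fin d → ℂ) := b.equivFun.toEquiv.trans (Equiv.piCongrRight fun _ => φ.toEquiv)
  have hτ : ∀ (x : U) (i : Fin d), τe x i = φ (b.repr x i) := by
    intro x i
    simp [τe, Basis.equivFun_apply]
  have hτ0 : τe 0 = 0 := by
    funext i; simp [hτ]
  have hadd : ∀ x y : U, τe (x + y) = τe x + τe y := by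
    intro x y; funext i; simp [hτ]
  have hsmul : ∀ (c : ℂ) (x : U), τe (c • x) = φ c • τe x := by
    intro c x; funext i; simp [hτ]
  have hcomm : ∀ (g : Γ) (x : U), τe (U.ρ g x) = W.ρ g (τe x) := by
    intro g x
    show τe (U.ρ g x) = ((LinearMap.toMatrix b b (U.ρ g)).map φ).mulVec (τe x)
    funext i
    have e2 : (τe (U.ρ g x)) i = φ (b.repr (U.ρ g x) i) := hτ _ i
    rw [e2, ← LinearMap.toMatrix_mulVec_repr b b (U.ρ g) x]
    simp [Matrix.mulVec, dotProduct, Matrix.map_apply, hτ, map_sum]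
  have hsimple : Simple W := by
    apply simple_of_invtSub W (inferInstanceAs (Nontrivial (Fin d → ℂ)))
    exact invt_transfer U W τe φ hadd hsmul hcomm hlat
  exact ⟨W, hsimple, hfinal⟩
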